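/- Let (Ω, μ) be a probability space. Suppose that for every real s ≥ 0 we are given a measurable event A(s) ⊆ Ω with p(s) = μ(A(s)) measurable in s, and that for all 0 ≤ t ≤ u the event O(t,u) = {ω : ∃ s ∈ [t,u], ω ∈ A(s)} is measurable. Write I(t,u) = ∫_t^u p(s) ds, and assume the renewal inequality: for all 0 ≤ t ≤ u, I(t,u) ≤ μ(O(t,u))·(t + I(t,u)). If for every t ≥ 0 the integral I(t,u) tends to ∞ as u → ∞, then for every t ≥ 0 one has μ(⋃_{u ≥ t} O(t,u)) = 1; that is, almost surely some event A(s) with s ≥ t occurs. -/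

import Mathlib

open MeasureTheory Set Filter

theorem stmt_0 {Ω : Type*} [MeasurableSpace Ω] (μ : Measure Ω) [IsProbabilityMeasure μ]
    (A : ℝ → Set Ω)
    (hA : ∀ s : ℝ, 0 ≤ s → MeasurableSet (A s))
    (hp : Measurable fun s : ℝ => (μ (A s)).toReal)
    (hO : ∀ t u : ℝ, 0 ≤ t → t ≤ u → MeasurableSet {ω : Ω | ∃ s ∈ Icc t u, ω ∈ A s})
    (hren : ∀ t u : ℝ, 0 ≤ t → t ≤ u →
      (∫ s in t..u, (μ (A s)).toReal) ≤
        (μ {ω : Ω | ∃ s ∈ Icc t u, ω ∈ A s}).toReal *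
          (t + ∫ s in t..u, (μ (A s)).toReal))
    (hdiv : ∀ t : ℝ, 0 ≤ t →
      Tendsto (fun u : ℝ => ∫ s in t..u, (μ (A s)).toReal) atTop atTop) :
    ∀ t : ℝ, 0 ≤ t →
      μ (⋃ u ∈ Ici t, {ω : Ω | ∃ s ∈ Icc t u, ω ∈ A s}) = 1 := by
  intro t ht
  set U := ⋃ u ∈ Ici t, {ω : Ω | ∃ s ∈ Icc t u, ω ∈ A s} with hUdef
  have hle1 : μ U ≤ 1 := prob_le_one
  set I : ℝ → ℝ := fun u => ∫ s in t..u, (μ (A s)).toReal with hIdef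
  have hIt : Tendsto I atTop atTop := hdiv t ht
  have hTI : Tendsto (fun u => t + I u) atTop atTop :=
    tendsto_atTop_add_const_left _ _ hIt
  have hfrac : Tendsto (fun u => I u / (t + I u)) atTop (nhds 1) := by
    have h0 : Tendsto (fun u => t / (t + I u)) atTop (nhds 0) :=
      Tendsto.div_atTop tendsto_const_nhds hTI
    have h1 : Tendsto (fun u => 1 - t / (t + I u)) atTop (nhds (1 - 0)) :=
      tendsto_const_nhds.sub h0
    rw [sub_zero] at h1
    refine h1.congr' ?_
    filter_upwards [hTI.eventually_gt_atTop 0] with u hu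
    field_simp
    ring
  have hle : ∀ᶠ u in atTop, I u / (t + I u) ≤ (μ U).toReal := by
    filter_upwards [eventually_ge_atTop t, hTI.eventually_gt_atTop 0] with u hu hpos
    have h1 := hren t u ht hu
    have h2 : μ {ω : Ω | ∃ s ∈ Icc t u, ω ∈ A s} ≤ μ U :=
      measure_mono (by
        refine subset_biUnion_of_mem (u := fun u => {ω : Ω | ∃ s ∈ Icc t u, ω ∈ A s}) ?_
        exact hu)
    have h2' : (μ {ω : Ω | ∃ s ∈ Icc t u, ω ∈ A s}).toReal ≤ (μ U).toReal :=
      ENNReal.toReal_mono (measure_ne_top μ U) h2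
    have h3 : I u / (t + I u) ≤ (μ {ω : Ω | ∃ s ∈ Icc t u, ω ∈ A s}).toReal :=
      (div_le_iff₀ hpos).mpr h1
    exact h3.trans h2'
  have hfinal : (1 : ℝ) ≤ (μ U).toReal := le_of_tendsto hfrac hle
  refine le_antisymm hle1 ?_
  exact (ENNReal.toReal_le_toReal ENNReal.one_ne_top (measure_ne_top μ U)).mp
    (by simpa using hfinal)
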